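/- Let p be a prime, n ≥ 1, M = s·p^m and N = s·p^n with gcd(s,p) = 1 and m ≥ n. If a ∈ K_N is totally positive and y = Σ_{i=0}^{p^{m-n}-1} x_i ζ_M^i with x_i ∈ O_{K_N}, then Tr_{K_M/ℚ}(a·y·ȳ) = p^{m-n} · Σ_{i=0}^{p^{m-n}-1} Tr_{K_N/ℚ}(a·x_i·x̄_i). -/

import Mathlib

noncomputable section

/-- Total positivity: all complex embeddings take positive real values. -/
def totPos (K : Type*) [Field K] [NumberField K] (a : K) : Prop :=
  ∀ φ : K →+* ℂ, 0 < (φ a).re ∧ (φ a).im = 0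

/-- The real value `Tr_{K/ℚ}(a·x·x̄) = ∑_φ φ(a)·|φ(x)|²` of the unary trace form at `x`. -/
def qform (K : Type*) [Field K] [NumberField K] (a x : K) : ℝ :=
  ∑ φ : K →+* ℂ, (φ a).re * Complex.normSq (φ x)

/-- `μ(a)`: the infimum of the trace form over nonzero algebraic integers. -/
def muK (K : Type*) [Field K] [NumberField K] (a : K) : ℝ :=
  sInf { t | ∃ x : NumberField.RingOfIntegers K, x ≠ 0 ∧ t = qform K a (x : K) }

/-- `μ*(a)`: the infimum of the trace form over units. -/
def muStarK (K : Type*) [Field K] [NumberField K] (a : K) : ℝ :=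
  sInf { t | ∃ u : (NumberField.RingOfIntegers K)ˣ,
    t = qform K a ((u : NumberField.RingOfIntegers K) : K) }

/-- A number field is unit reducible if `μ(a) = μ*(a)` for all totally positive `a`. -/
def UnitReducible (K : Type*) [Field K] [NumberField K] : Prop :=
  ∀ a : K, totPos K a → muK K a = muStarK K a

/-- The reduction discrepancy `δ_K = sup_a μ*(a)/μ(a)`. -/
def deltaK (K : Type*) [Field K] [NumberField K] : ℝ :=
  sSup { t | ∃ a : K, totPos K a ∧ t = muStarK K a / muK K a }

open Module Polynomial in
theorem stmt2aux (p s m n : ℕ) (hp : p.Prime) (hs : s.Coprime p) (hmn : n ≤ m) (hn : 1 ≤ n)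
    (M N : ℕ+) (hM : (M : ℕ) = s * p ^ m) (hN : (N : ℕ) = s * p ^ n)
    (K L : Type) [Field K] [Field L] [Algebra ℚ K] [Algebra ℚ L]
    [Algebra L K] [IsScalarTower ℚ L K]
    [IsCyclotomicExtension {(M : ℕ)} ℚ K] [IsCyclotomicExtension {(N : ℕ)} ℚ L]
    [NumberField K] [NumberField L]
    (ζ : K) (hζ : IsPrimitiveRoot ζ M)
    (ζN : L) (hζN : IsPrimitiveRoot ζN N)
    (d : ℕ) (hd : d = p ^ (m - n))
    (hcomp : algebraMap L K ζN = ζ ^ d)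
    (σK : K ≃ₐ[ℚ] K) (hσK : σK ζ = ζ⁻¹)
    (σL : L ≃ₐ[ℚ] L) (hσL : σL ζN = ζN⁻¹)
    (a : L)
    (x : Fin d → L) :
    Algebra.trace ℚ K (algebraMap L K a *
        (∑ i : Fin d, algebraMap L K (x i) * ζ ^ (i : ℕ)) *
        σK (∑ i : Fin d, algebraMap L K (x i) * ζ ^ (i : ℕ))) =
      (d : ℚ) * ∑ i : Fin d, Algebra.trace ℚ L (a * x i * σL (x i)) := by
  classical
  have hd0 : 0 < d := hd ▸ pow_pos hp.pos _
  have hζ0 : ζ ≠ 0 := hζ.ne_zero M.pos.ne'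
  have hirrM : Irreducible (cyclotomic M ℚ) := cyclotomic.irreducible_rat M.pos
  have hirrN : Irreducible (cyclotomic N ℚ) := cyclotomic.irreducible_rat N.pos
  haveI : Module.Finite L K := Module.Finite.right ℚ L K
  haveI : IsGalois ℚ K := IsCyclotomicExtension.isGalois {(M : ℕ)} ℚ K
  haveI : IsGalois L K := IsGalois.tower_top_of_isGalois ℚ L K
  -- finrank L K = d
  have hrank : finrank L K = d := by
    have hKQ : finrank ℚ K = (M : ℕ).totient := IsCyclotomicExtension.finrank K hirrM
    have hLQ : finrank ℚ L = (N : ℕ).totient := IsCyclotomicExtension.finrank L hirrN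
    have hmul : finrank ℚ L * finrank L K = finrank ℚ K := Module.finrank_mul_finrank ℚ L K
    have htM : (M : ℕ).totient = s.totient * (p ^ (m-1) * (p - 1)) := by
      rw [hM, Nat.totient_mul (hs.pow_right m), Nat.totient_prime_pow hp (by omega)]
    have htN : (N : ℕ).totient = s.totient * (p ^ (n-1) * (p - 1)) := by
      rw [hN, Nat.totient_mul (hs.pow_right n), Nat.totient_prime_pow hp (by omega)]
    have hpe : p ^ (m-1) = p ^ (n-1) * p ^ (m-n) := by
      rw [← pow_add]; congr 1; omega
    have hNpos : 0 < (N : ℕ).totient := Nat.totient_pos.mpr N.pos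
    apply Nat.eq_of_mul_eq_mul_left hNpos
    rw [hLQ] at hmul
    rw [hmul, hKQ, htM, htN, hpe, hd]; ring
  -- ξ : primitive d-th root of unity in K
  have hξ : IsPrimitiveRoot (ζ ^ (s * p ^ n)) d := by
    refine hζ.pow M.pos ?_
    rw [hM, hd, mul_assoc, ← pow_add]
    congr 2; omega
  set ξ : K := ζ ^ (s * p ^ n) with hxi
  -- commutation of σK with algebraMap L K via σL
  have hadjL : Algebra.adjoin ℚ ({ζN} : Set L) = ⊤ :=
    IsCyclotomicExtension.adjoin_primitive_root_eq_top hζN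
  have hadjK : Algebra.adjoin ℚ ({ζ} : Set K) = ⊤ :=
    IsCyclotomicExtension.adjoin_primitive_root_eq_top hζ
  have hcommL : ∀ z : L, σK (algebraMap L K z) = algebraMap L K (σL z) := by
    have heq : (σK.toAlgHom.comp (IsScalarTower.toAlgHom ℚ L K)) =
        ((IsScalarTower.toAlgHom ℚ L K).comp σL.toAlgHom) := by
      apply AlgHom.ext_of_adjoin_eq_top hadjL
      intro z hz
      rw [Set.mem_singleton_iff] at hz; subst hz
      simp only [AlgHom.coe_comp, Function.comp_apply, IsScalarTower.coe_toAlgHom',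
        AlgEquiv.toAlgHom_eq_coe, AlgHom.coe_coe, AlgEquiv.coe_toAlgHom]
      rw [hcomp, map_pow, hσK, hσL, map_inv₀, hcomp, ← inv_pow]
    intro z
    exact DFunLike.congr_fun heq z
  -- L-algebra automorphisms of K are determined by the image of ζ
  have hext : ∀ σ τ : K ≃ₐ[L] K, σ ζ = τ ζ → σ = τ := by
    intro σ τ h
    have heq : (σ.toAlgHom.restrictScalars ℚ) = (τ.toAlgHom.restrictScalars ℚ) := by
      apply AlgHom.ext_of_adjoin_eq_top hadjK
      intro z hz
      rw [Set.mem_singleton_iff] at hz; subst hz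
      exact h
    ext z
    exact DFunLike.congr_fun heq z
  -- each L-automorphism sends ζ to ζ * ξ^j
  have hfix : ∀ σ : K ≃ₐ[L] K, (σ ζ * ζ⁻¹) ^ d = 1 := by
    intro σ
    have h1 : σ (ζ ^ d) = ζ ^ d := by
      rw [← hcomp]; exact σ.commutes ζN
    rw [mul_pow, ← map_pow, h1, inv_pow, mul_inv_cancel₀ (pow_ne_zero _ hζ0)]
  haveI : NeZero d := ⟨hd0.ne'⟩
  have hchoice : ∀ σ : K ≃ₐ[L] K, ∃ j : Fin d, σ ζ = ζ * ξ ^ (j : ℕ) := by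
    intro σ
    obtain ⟨j, hj, hje⟩ := hξ.eq_pow_of_pow_eq_one (hfix σ)
    exact ⟨⟨j, hj⟩, by rw [hje]; field_simp⟩
  choose F hF using hchoice
  have hFinj : Function.Injective F := by
    intro σ τ h
    apply hext
    rw [hF σ, hF τ, h]
  have hFbij : Function.Bijective F := by
    rw [Fintype.bijective_iff_injective_and_card]
    refine ⟨hFinj, ?_⟩
    rw [← Nat.card_eq_fintype_card, IsGalois.card_aut_eq_finrank, hrank, Fintype.card_fin]
  -- key trace computation
  have htr0 : ∀ t : ℤ, ¬ ((d : ℤ) ∣ t) → Algebra.trace L K (ζ ^ t) = 0 := by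
    intro t ht
    apply (algebraMap L K).injective
    rw [map_zero, trace_eq_sum_automorphisms]
    have h1 : ∀ σ : K ≃ₐ[L] K, σ (ζ ^ t) = (ζ * ξ ^ ((F σ : Fin d) : ℕ)) ^ t := by
      intro σ; rw [map_zpow₀, hF]
    rw [Fintype.sum_congr _ _ h1, Fintype.sum_bijective F hFbij _
      (fun j : Fin d => (ζ * ξ ^ (j : ℕ)) ^ t) (fun σ => rfl)]
    have h2 : ∀ j : Fin d, (ζ * ξ ^ (j : ℕ)) ^ t = ζ ^ t * (ξ ^ t) ^ (j : ℕ) := by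
      intro j
      rw [mul_zpow]; congr 1
      rw [← zpow_natCast ξ (j : ℕ), ← zpow_mul, ← zpow_natCast (ξ ^ t) (j : ℕ), ← zpow_mul,
        mul_comm]
    rw [Fintype.sum_congr _ _ h2, ← Finset.mul_sum]
    have hne1 : ξ ^ t ≠ 1 := fun hone => ht ((hξ.zpow_eq_one_iff_dvd t).mp hone)
    have hgeo : ∑ j : Fin d, (ξ ^ t) ^ (j : ℕ) = 0 := by
      rw [Fin.sum_univ_eq_sum_range (fun j => (ξ ^ t) ^ j), geom_sum_eq hne1,
        ← zpow_natCast (ξ ^ t) d, ← zpow_mul, mul_comm t (d : ℤ), zpow_mul,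
        zpow_natCast, hξ.pow_eq_one, one_zpow, sub_self, zero_div]
    rw [hgeo, mul_zero]
  have htr1 : Algebra.trace L K (1 : K) = (d : L) := by
    have h := Algebra.trace_algebraMap (S := K) (1 : L)
    rw [map_one] at h
    rw [h, hrank, nsmul_eq_mul, mul_one]
  -- trace of ζ^i * ζ⁻¹^j
  have hT : ∀ i j : Fin d, Algebra.trace L K (ζ ^ (i : ℕ) * (ζ⁻¹) ^ (j : ℕ)) =
      if i = j then (d : L) else 0 := by
    intro i j
    by_cases hij : i = j
    · subst hij
      rw [inv_pow, mul_inv_cancel₀ (pow_ne_zero _ hζ0), htr1, if_pos rfl]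
    · rw [if_neg hij]
      have hzp : ζ ^ (i : ℕ) * (ζ⁻¹) ^ (j : ℕ) = ζ ^ (((i : ℕ) : ℤ) - ((j : ℕ) : ℤ)) := by
        rw [inv_pow, ← zpow_natCast ζ (i : ℕ), ← zpow_natCast ζ (j : ℕ), ← zpow_neg,
          ← zpow_add₀ hζ0, sub_eq_add_neg]
      rw [hzp]
      apply htr0
      intro hdvd
      have hi : (i : ℕ) < d := i.isLt
      have hj : (j : ℕ) < d := j.isLt
      have habs : |((i : ℕ) : ℤ) - ((j : ℕ) : ℤ)| < (d : ℤ) := by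
        rw [abs_lt]; omega
      have h0 : ((i : ℕ) : ℤ) - ((j : ℕ) : ℤ) = 0 := Int.eq_zero_of_abs_lt_dvd hdvd habs
      exact hij (Fin.ext (by omega))
  -- expand the product
  have hterm : ∀ j : Fin d, σK (algebraMap L K (x j) * ζ ^ (j : ℕ)) =
      algebraMap L K (σL (x j)) * (ζ⁻¹) ^ (j : ℕ) := by
    intro j; rw [map_mul, map_pow, hσK, hcommL]
  have hexp : algebraMap L K a *
        (∑ i : Fin d, algebraMap L K (x i) * ζ ^ (i : ℕ)) *
        σK (∑ i : Fin d, algebraMap L K (x i) * ζ ^ (i : ℕ)) =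
      ∑ i : Fin d, ∑ j : Fin d,
        algebraMap L K (a * x i * σL (x j)) * (ζ ^ (i : ℕ) * (ζ⁻¹) ^ (j : ℕ)) := by
    rw [map_sum]
    simp only [hterm]
    rw [mul_assoc, Finset.sum_mul_sum, Finset.mul_sum]
    refine Finset.sum_congr rfl fun i _ => ?_
    rw [Finset.mul_sum]
    refine Finset.sum_congr rfl fun j _ => ?_
    simp only [map_mul]
    ring
  rw [hexp, ← Algebra.trace_trace (S := L), map_sum, map_sum]
  simp only [map_sum]
  have hinner : ∀ i j : Fin d,
      Algebra.trace L K (algebraMap L K (a * x i * σL (x j)) * (ζ ^ (i : ℕ) * (ζ⁻¹) ^ (j : ℕ))) =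
      (a * x i * σL (x j)) * (if i = j then (d : L) else 0) := by
    intro i j
    rw [← Algebra.smul_def, LinearMap.map_smul, smul_eq_mul, hT]
  have hsum : ∀ i : Fin d, (∑ j : Fin d, Algebra.trace ℚ L (Algebra.trace L K
      (algebraMap L K (a * x i * σL (x j)) * (ζ ^ (i : ℕ) * (ζ⁻¹) ^ (j : ℕ))))) =
      (d : ℚ) * Algebra.trace ℚ L (a * x i * σL (x i)) := by
    intro i
    have h3 : ∀ j : Fin d, Algebra.trace ℚ L (Algebra.trace L K
        (algebraMap L K (a * x i * σL (x j)) * (ζ ^ (i : ℕ) * (ζ⁻¹) ^ (j : ℕ)))) =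
        if i = j then (d : ℚ) * Algebra.trace ℚ L (a * x i * σL (x j)) else 0 := by
      intro j
      rw [hinner]
      by_cases hij : i = j
      · rw [if_pos hij, if_pos hij]
        have h2 : (a * x i * σL (x j)) * (d : L) = (d : ℚ) • (a * x i * σL (x j)) := by
          rw [Algebra.smul_def, map_natCast, mul_comm]
        rw [h2, LinearMap.map_smul, smul_eq_mul]
      · rw [if_neg hij, if_neg hij, mul_zero, map_zero]
    rw [Fintype.sum_congr _ _ h3]
    simp [Finset.sum_ite_eq]
  rw [Fintype.sum_congr _ _ hsum, ← Finset.mul_sum]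

/-- The trace form of a lifted totally positive `a` decomposes along the basis
`1, ζ_M, …, ζ_M^{p^{m-n}-1}` of `K_M` over `K_N`. -/
theorem stmt2 (p s m n : ℕ) (hp : p.Prime) (hs : s.Coprime p) (hmn : n ≤ m) (hn : 1 ≤ n)
    (hs0 : 0 < s)
    (M N : ℕ+) (hM : (M : ℕ) = s * p ^ m) (hN : (N : ℕ) = s * p ^ n)
    (K L : Type) [Field K] [Field L] [Algebra ℚ K] [Algebra ℚ L]
    [Algebra L K] [IsScalarTower ℚ L K]
    [IsCyclotomicExtension {(M : ℕ)} ℚ K] [IsCyclotomicExtension {(N : ℕ)} ℚ L]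
    [NumberField K] [NumberField L]
    (ζ : K) (hζ : IsPrimitiveRoot ζ M)
    (ζN : L) (hζN : IsPrimitiveRoot ζN N)
    (hcomp : algebraMap L K ζN = ζ ^ (p ^ (m - n)))
    (σK : K ≃ₐ[ℚ] K) (hσK : σK ζ = ζ⁻¹)
    (σL : L ≃ₐ[ℚ] L) (hσL : σL ζN = ζN⁻¹)
    (a : L) (ha : totPos L a)
    (x : Fin (p ^ (m - n)) → L) (hx : ∀ i, IsIntegral ℤ (x i)) :
    Algebra.trace ℚ K (algebraMap L K a *
        (∑ i : Fin (p ^ (m - n)), algebraMap L K (x i) * ζ ^ (i : ℕ)) *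
        σK (∑ i : Fin (p ^ (m - n)), algebraMap L K (x i) * ζ ^ (i : ℕ))) =
      (p : ℚ) ^ (m - n) *
        ∑ i : Fin (p ^ (m - n)), Algebra.trace ℚ L (a * x i * σL (x i)) := by
  have h := stmt2aux p s m n hp hs hmn hn M N hM hN K L ζ hζ ζN hζN
    (p ^ (m - n)) rfl hcomp σK hσK σL hσL a x
  rw [h]
  push_cast
  ring
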